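/- Let (Ψ_n) be i.i.d. random continuous maps of ℝ with law μ, and let ν be a Radon measure on ℝ that is μ-invariant, i.e. ∫∫ f(ψ(x)) ν(dx) μ(dψ) = ∫ f dν for all compactly supported continuous f. Then for any pair of intervals V, U ⊂ ℝ, ν(V) ≥ P(T_𝔚 < ∞) · ν(U), where 𝔚 = {ψ : ψ(U) ⊂ V} and T_𝔚 = inf{n ≥ 0 : Ψ₁∘⋯∘Ψ_n ∈ 𝔚}. -/

import Mathlib

open MeasureTheory ProbabilityTheory

/-- The backward composition `Ψ₁ ∘ ⋯ ∘ Ψ_n` (with `Ψ` indexed from `0`). -/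
def backComp {Ω : Type*} (Ψ : ℕ → Ω → ℝ → ℝ) (ω : Ω) : ℕ → ℝ → ℝ
  | 0 => id
  | n + 1 => backComp Ψ ω n ∘ Ψ n ω


open scoped ENNReal
section Aux

variable {Ω : Type*}

lemma backComp_succ (Ψ : ℕ → Ω → ℝ → ℝ) (ω : Ω) (n : ℕ) (x : ℝ) :
    backComp Ψ ω (n + 1) x = backComp Ψ ω n (Ψ n ω x) := rfl

lemma backComp_continuous {Ψ : ℕ → Ω → ℝ → ℝ} {ω : Ω} (h : ∀ n, Continuous (Ψ n ω)) :
    ∀ n, Continuous (backComp Ψ ω n)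
  | 0 => continuous_id
  | (n + 1) => Continuous.comp (backComp_continuous h n) (h n)

/-- The σ-algebra generated by `Ψ 0, ..., Ψ (N-1)`. -/
def filt (Ψ : ℕ → Ω → ℝ → ℝ) (N : ℕ) : MeasurableSpace Ω :=
  ⨆ i ∈ Set.Iio N, MeasurableSpace.comap (Ψ i) MeasurableSpace.pi

lemma comap_le_filt (Ψ : ℕ → Ω → ℝ → ℝ) {i N : ℕ} (h : i < N) :
    MeasurableSpace.comap (Ψ i) MeasurableSpace.pi ≤ filt Ψ N :=
  le_biSup (fun i => MeasurableSpace.comap (Ψ i) MeasurableSpace.pi)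
    (show i ∈ Set.Iio N from h)

lemma filt_mono (Ψ : ℕ → Ω → ℝ → ℝ) {N M : ℕ} (h : N ≤ M) : filt Ψ N ≤ filt Ψ M :=
  biSup_mono fun _ hi => lt_of_lt_of_le hi h

lemma filt_le [m : MeasurableSpace Ω] {Ψ : ℕ → Ω → ℝ → ℝ} (hmeas : ∀ n, Measurable (Ψ n))
    (N : ℕ) : filt Ψ N ≤ m :=
  iSup₂_le fun i _ => measurable_iff_comap_le.mp (hmeas i)

lemma measurable_psi_uncurry [m : MeasurableSpace Ω] {Ψ : ℕ → Ω → ℝ → ℝ} (i : ℕ)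
    (hc : ∀ ω, Continuous (Ψ i ω)) (hx : ∀ x : ℝ, Measurable fun ω => Ψ i ω x) :
    Measurable fun p : Ω × ℝ => Ψ i p.1 p.2 := by
  have h := measurable_uncurry_of_continuous_of_measurable
    (u := fun (x : ℝ) (ω : Ω) => Ψ i ω x) hc hx
  exact h.comp measurable_swap

lemma measurable_backComp_uncurry [m : MeasurableSpace Ω] {Ψ : ℕ → Ω → ℝ → ℝ}
    (hc : ∀ ω n, Continuous (Ψ n ω)) (hx : ∀ i (x : ℝ), Measurable fun ω => Ψ i ω x) :
    ∀ n, Measurable fun p : Ω × ℝ => backComp Ψ p.1 n p.2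
  | 0 => measurable_snd
  | (n + 1) => by
      have h1 : Measurable fun p : Ω × ℝ => (p.1, Ψ n p.1 p.2) :=
        measurable_fst.prodMk (measurable_psi_uncurry n (fun ω => hc ω n) (hx n))
      exact (measurable_backComp_uncurry hc hx n).comp h1

/-- Truncation of the sequence of maps: identity from index `N` on. -/
def trunc (Ψ : ℕ → Ω → ℝ → ℝ) (N i : ℕ) : Ω → ℝ → ℝ :=
  if i < N then Ψ i else fun _ => id

lemma trunc_backComp (Ψ : ℕ → Ω → ℝ → ℝ) (N : ℕ) (ω : Ω) :
    ∀ n, n ≤ N → backComp (trunc Ψ N) ω n = backComp Ψ ω n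
  | 0, _ => rfl
  | (n + 1), h => by
      have hn : n < N := h
      funext x
      rw [backComp_succ, backComp_succ, trunc_backComp Ψ N ω n hn.le]
      simp only [trunc, if_pos hn]

lemma filt_measurable_backComp {Ψ : ℕ → Ω → ℝ → ℝ} (hc : ∀ ω n, Continuous (Ψ n ω)) (N : ℕ) :
    Measurable[(filt Ψ N).prod inferInstance] fun p : Ω × ℝ => backComp Ψ p.1 N p.2 := by
  have hx : ∀ i (x : ℝ), Measurable[filt Ψ N] fun ω => trunc Ψ N i ω x := by
    intro i x
    by_cases h : i < N
    · simp only [trunc, if_pos h]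
      have h1 : Measurable[MeasurableSpace.comap (Ψ i) MeasurableSpace.pi]
          fun ω => Ψ i ω x :=
        (measurable_pi_apply x).comp (measurable_iff_comap_le.mpr le_rfl)
      exact h1.mono (comap_le_filt Ψ h) le_rfl
    · simp only [trunc, if_neg h]
      exact measurable_const
  have hc' : ∀ ω i, Continuous (trunc Ψ N i ω) := by
    intro ω i
    by_cases h : i < N
    · simp only [trunc, if_pos h]; exact hc ω i
    · simp only [trunc, if_neg h]; exact continuous_id
  have h := measurable_backComp_uncurry (m := filt Ψ N) hc' hx N
  have he : (fun p : Ω × ℝ => backComp (trunc Ψ N) p.1 N p.2)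
      = fun p : Ω × ℝ => backComp Ψ p.1 N p.2 := by
    funext p; rw [trunc_backComp Ψ N p.1 N le_rfl]
  rw [he] at h
  exact h

lemma filt_measurable_backComp_eval {Ψ : ℕ → Ω → ℝ → ℝ} (hc : ∀ ω n, Continuous (Ψ n ω))
    (N : ℕ) (d : ℝ) : Measurable[filt Ψ N] fun ω => backComp Ψ ω N d :=
  (filt_measurable_backComp hc N).comp (measurable_id.prodMk measurable_const)

lemma goodSet_iff_iInter {Ψ : ℕ → Ω → ℝ → ℝ} {ω : Ω} (hc : ∀ n, Continuous (Ψ n ω))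
    {U V D : Set ℝ} (hV : IsClosed V) (hDU : D ⊆ U) (hUD : U ⊆ closure D) (n : ℕ) :
    (∀ x ∈ U, backComp Ψ ω n x ∈ V) ↔ ∀ d ∈ D, backComp Ψ ω n d ∈ V := by
  constructor
  · exact fun h d hd => h d (hDU hd)
  · intro h x hx
    have h1 : closure D ⊆ (backComp Ψ ω n) ⁻¹' V :=
      closure_minimal (fun d hd => h d hd) (hV.preimage (backComp_continuous hc n))
    exact h1 (hUD hx)

/-- Stopping time capped at `N`. -/
noncomputable def stopT (g : ℕ → Prop) (N : ℕ) : ℕ := sInf ({n | g n} ∪ {N})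

lemma stopT_le (g : ℕ → Prop) (N : ℕ) : stopT g N ≤ N :=
  Nat.sInf_le (Or.inr rfl)

lemma stopT_eq_of_not {g : ℕ → Prop} {N : ℕ} (h : ∀ n ≤ N, ¬ g n) : stopT g N = N := by
  refine le_antisymm (stopT_le g N) (le_csInf ⟨N, Or.inr rfl⟩ ?_)
  rintro b (hb | hb)
  · by_contra hlt
    push_neg at hlt
    exact h b hlt.le hb
  · exact le_of_eq (Set.mem_singleton_iff.mp hb).symm

lemma stopT_succ_eq_of_not {g : ℕ → Prop} {N : ℕ} (h : ∀ n ≤ N, ¬ g n) :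
    stopT g (N + 1) = N + 1 := by
  refine le_antisymm (stopT_le g (N + 1)) (le_csInf ⟨N + 1, Or.inr rfl⟩ ?_)
  rintro b (hb | hb)
  · by_contra hlt
    push_neg at hlt
    exact h b (by omega) hb
  · exact le_of_eq (Set.mem_singleton_iff.mp hb).symm

lemma stopT_eq_sInf {g : ℕ → Prop} {N n : ℕ} (hg : g n) (hnN : n ≤ N) :
    stopT g N = sInf {n | g n} := by
  have hne : Set.Nonempty {n | g n} := ⟨n, hg⟩
  have hmem := Nat.sInf_mem hne
  refine le_antisymm (Nat.sInf_le (Or.inl hmem)) (le_csInf ⟨n, Or.inl hg⟩ ?_)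
  rintro b (hb | hb)
  · exact Nat.sInf_le hb
  · have hbN : b = N := Set.mem_singleton_iff.mp hb
    have := Nat.sInf_le (show n ∈ {n | g n} from hg)
    omega

lemma stopT_succ_eq_of_exists {g : ℕ → Prop} {N : ℕ} (h : ∃ n ≤ N, g n) :
    stopT g (N + 1) = stopT g N := by
  obtain ⟨n, hnN, hgn⟩ := h
  rw [stopT_eq_sInf hgn hnN, stopT_eq_sInf hgn (by omega)]

lemma stopT_eq_first {g : ℕ → Prop} {N n : ℕ} (hg : g n) (hmin : ∀ k < n, ¬ g k)
    (hnN : n ≤ N) : stopT g N = n := by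
  rw [stopT_eq_sInf hg hnN]
  refine le_antisymm (Nat.sInf_le hg) (le_csInf ⟨n, hg⟩ ?_)
  intro b hb
  by_contra hlt
  push_neg at hlt
  exact hmin b hlt hb

end Aux
section Meas

variable {Ω : Type*} [MeasurableSpace Ω]

lemma nu_slice_swap (P : Measure Ω) [IsProbabilityMeasure P] (ν : Measure ℝ) [SigmaFinite ν]
    {s : Set (Ω × ℝ)} (hs : MeasurableSet s) :
    ∫⁻ ω, ν {x | (ω, x) ∈ s} ∂P = ∫⁻ x, P {ω | (ω, x) ∈ s} ∂ν := by
  have h1 : ∫⁻ ω, ν {x | (ω, x) ∈ s} ∂P = P.prod ν s := (Measure.prod_apply hs).symm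
  have h2 : ∫⁻ x, P {ω | (ω, x) ∈ s} ∂ν = P.prod ν s := (Measure.prod_apply_symm hs).symm
  rw [h1, h2]

lemma lintegral_nu_psi (P : Measure Ω) [IsProbabilityMeasure P] (Ψ : ℕ → Ω → ℝ → ℝ)
    (hmeas : ∀ n, Measurable (Ψ n))
    (hident : ∀ n, Measure.map (Ψ n) P = Measure.map (Ψ 0) P)
    (hc : ∀ ω n, Continuous (Ψ n ω))
    (ν : Measure ℝ) [SigmaFinite ν]
    (hinv : ∀ B : Set ℝ, MeasurableSet B → ∫⁻ ω, ν ((Ψ 0 ω) ⁻¹' B) ∂P = ν B)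
    {B : Set ℝ} (hB : MeasurableSet B) (n : ℕ) :
    ∫⁻ ω, ν {x | Ψ n ω x ∈ B} ∂P = ν B := by
  have hx : ∀ m (x : ℝ), Measurable fun ω => Ψ m ω x :=
    fun m x => (measurable_pi_apply x).comp (hmeas m)
  have hj : ∀ m, Measurable fun p : Ω × ℝ => Ψ m p.1 p.2 :=
    fun m => measurable_psi_uncurry m (fun ω => hc ω m) (hx m)
  have hswap : ∀ m, ∫⁻ ω, ν {x | Ψ m ω x ∈ B} ∂P = ∫⁻ x, P {ω | Ψ m ω x ∈ B} ∂ν :=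
    fun m => nu_slice_swap P ν ((hj m) hB)
  have hlaw : ∀ m (x : ℝ), P {ω | Ψ m ω x ∈ B} = P {ω | Ψ 0 ω x ∈ B} := by
    intro m x
    have hcyl : MeasurableSet {f : ℝ → ℝ | f x ∈ B} := measurable_pi_apply x hB
    have e1 : {ω | Ψ m ω x ∈ B} = Ψ m ⁻¹' {f | f x ∈ B} := rfl
    have e2 : {ω | Ψ 0 ω x ∈ B} = Ψ 0 ⁻¹' {f | f x ∈ B} := rfl
    rw [e1, e2, ← Measure.map_apply (hmeas m) hcyl, ← Measure.map_apply (hmeas 0) hcyl,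
      hident m]
  calc ∫⁻ ω, ν {x | Ψ n ω x ∈ B} ∂P
      = ∫⁻ x, P {ω | Ψ n ω x ∈ B} ∂ν := hswap n
    _ = ∫⁻ x, P {ω | Ψ 0 ω x ∈ B} ∂ν := lintegral_congr fun x => hlaw n x
    _ = ∫⁻ ω, ν {x | Ψ 0 ω x ∈ B} ∂P := (hswap 0).symm
    _ = ν B := hinv B hB

lemma rect_lemma (P : Measure Ω) [IsProbabilityMeasure P] (Ψ : ℕ → Ω → ℝ → ℝ)
    (hmeas : ∀ n, Measurable (Ψ n))
    (hindep : iIndepFun Ψ P)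
    (hident : ∀ n, Measure.map (Ψ n) P = Measure.map (Ψ 0) P)
    (hc : ∀ ω n, Continuous (Ψ n ω))
    (ν : Measure ℝ) [SigmaFinite ν]
    (hinv : ∀ B : Set ℝ, MeasurableSet B → ∫⁻ ω, ν ((Ψ 0 ω) ⁻¹' B) ∂P = ν B)
    (N : ℕ) {A : Set Ω} (hA : MeasurableSet[filt Ψ N] A)
    {B : Set ℝ} (hB : MeasurableSet B) :
    ∫⁻ ω, ν {x | ω ∈ A ∧ Ψ N ω x ∈ B} ∂P = P A * ν B := by
  have hx : ∀ m (x : ℝ), Measurable fun ω => Ψ m ω x :=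
    fun m x => (measurable_pi_apply x).comp (hmeas m)
  have hj : Measurable fun p : Ω × ℝ => Ψ N p.1 p.2 :=
    measurable_psi_uncurry N (fun ω => hc ω N) (hx N)
  have hAmeas : MeasurableSet A := filt_le hmeas N _ hA
  have hs : MeasurableSet {p : Ω × ℝ | p.1 ∈ A ∧ Ψ N p.1 p.2 ∈ B} :=
    (measurable_fst hAmeas).inter (hj hB)
  have hIndep : Indep (filt Ψ N) (MeasurableSpace.comap (Ψ N) MeasurableSpace.pi) P := by
    have hii : iIndep (fun i => MeasurableSpace.comap (Ψ i) MeasurableSpace.pi) P := hindep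
    have h1 := indep_iSup_of_disjoint (μ := P)
      (fun i => measurable_iff_comap_le.mp (hmeas i)) hii
      (S := Set.Iio N) (T := {N}) (by simp)
    have h2 : (⨆ i ∈ ({N} : Set ℕ), MeasurableSpace.comap (Ψ i) MeasurableSpace.pi)
        = MeasurableSpace.comap (Ψ N) MeasurableSpace.pi := by simp
    rw [h2] at h1
    exact h1
  have hint : ∀ x : ℝ, P {ω | ω ∈ A ∧ Ψ N ω x ∈ B} = P A * P {ω | Ψ N ω x ∈ B} := by
    intro x
    have hC : MeasurableSet[MeasurableSpace.comap (Ψ N) MeasurableSpace.pi]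
        {ω | Ψ N ω x ∈ B} := ⟨{f | f x ∈ B}, measurable_pi_apply x hB, rfl⟩
    have heq : {ω | ω ∈ A ∧ Ψ N ω x ∈ B} = A ∩ {ω | Ψ N ω x ∈ B} := rfl
    rw [heq]
    exact (hIndep.indepSet_of_measurableSet hA hC).measure_inter_eq_mul
  calc ∫⁻ ω, ν {x | ω ∈ A ∧ Ψ N ω x ∈ B} ∂P
      = ∫⁻ x, P {ω | ω ∈ A ∧ Ψ N ω x ∈ B} ∂ν := nu_slice_swap P ν hs
    _ = ∫⁻ x, P A * P {ω | Ψ N ω x ∈ B} ∂ν := lintegral_congr fun x => hint x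
    _ = P A * ∫⁻ x, P {ω | Ψ N ω x ∈ B} ∂ν :=
        lintegral_const_mul' _ _ (measure_ne_top P A)
    _ = P A * ∫⁻ ω, ν {x | Ψ N ω x ∈ B} ∂P := by
        have := nu_slice_swap P ν (hj hB)
        have h3 : ∫⁻ ω, ν {x | Ψ N ω x ∈ B} ∂P = ∫⁻ x, P {ω | Ψ N ω x ∈ B} ∂ν := this
        rw [h3]
    _ = P A * ν B := by rw [lintegral_nu_psi P Ψ hmeas hident hc ν hinv hB N]

end Meas
section Step

variable {Ω : Type*} [MeasurableSpace Ω]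

lemma step_lemma (P : Measure Ω) [IsProbabilityMeasure P] (Ψ : ℕ → Ω → ℝ → ℝ)
    (hmeas : ∀ n, Measurable (Ψ n))
    (hindep : iIndepFun Ψ P)
    (hident : ∀ n, Measure.map (Ψ n) P = Measure.map (Ψ 0) P)
    (hc : ∀ ω n, Continuous (Ψ n ω))
    (ν : Measure ℝ) [SigmaFinite ν]
    (hinv : ∀ B : Set ℝ, MeasurableSet B → ∫⁻ ω, ν ((Ψ 0 ω) ⁻¹' B) ∂P = ν B)
    (N : ℕ) {s : Set (Ω × ℝ)}
    (hs : MeasurableSet[(filt Ψ N).prod (inferInstance : MeasurableSpace ℝ)] s) :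
    ∫⁻ ω, ν {x | (ω, Ψ N ω x) ∈ s} ∂P = ∫⁻ ω, ν {x | (ω, x) ∈ s} ∂P := by
  classical
  have hx : ∀ m (x : ℝ), Measurable fun ω => Ψ m ω x :=
    fun m x => (measurable_pi_apply x).comp (hmeas m)
  have hT : Measurable fun p : Ω × ℝ => (p.1, Ψ N p.1 p.2) :=
    measurable_fst.prodMk (measurable_psi_uncurry N (fun ω => hc ω N) (hx N))
  have hle : (filt Ψ N).prod (inferInstance : MeasurableSpace ℝ)
      ≤ (Prod.instMeasurableSpace : MeasurableSpace (Ω × ℝ)) :=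
    sup_le_sup (MeasurableSpace.comap_mono (filt_le hmeas N)) le_rfl
  -- the two measures, as measures on the sub-σ-algebra
  have hμ₁eval : ∀ u : Set (Ω × ℝ),
      MeasurableSet[(filt Ψ N).prod (inferInstance : MeasurableSpace ℝ)] u →
      (((P.prod ν).map (fun p : Ω × ℝ => (p.1, Ψ N p.1 p.2))).trim hle) u
        = ∫⁻ ω, ν {x | (ω, Ψ N ω x) ∈ u} ∂P := by
    intro u hu
    rw [trim_measurableSet_eq hle hu, Measure.map_apply hT (hle _ hu),
      Measure.prod_apply (hT (hle _ hu))]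
    rfl
  have hμ₂eval : ∀ u : Set (Ω × ℝ),
      MeasurableSet[(filt Ψ N).prod (inferInstance : MeasurableSpace ℝ)] u →
      ((P.prod ν).trim hle) u = ∫⁻ ω, ν {x | (ω, x) ∈ u} ∂P := by
    intro u hu
    rw [trim_measurableSet_eq hle hu, Measure.prod_apply (hle _ hu)]
    rfl
  -- the π-system of rectangles
  have hgen : ((filt Ψ N).prod (inferInstance : MeasurableSpace ℝ))
      = MeasurableSpace.generateFrom (Set.image2 (· ×ˢ ·)
        {A : Set Ω | MeasurableSet[filt Ψ N] A} {B : Set ℝ | MeasurableSet B}) :=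
    (@generateFrom_prod Ω ℝ (filt Ψ N) (inferInstance : MeasurableSpace ℝ)).symm
  have hpi : IsPiSystem (Set.image2 (· ×ˢ ·)
      {A : Set Ω | MeasurableSet[filt Ψ N] A} {B : Set ℝ | MeasurableSet B}) :=
    @isPiSystem_prod Ω ℝ (filt Ψ N) (inferInstance : MeasurableSpace ℝ)
  have hCmeas : ∀ c ∈ (Set.image2 (· ×ˢ ·)
      {A : Set Ω | MeasurableSet[filt Ψ N] A} {B : Set ℝ | MeasurableSet B}),
      MeasurableSet[(filt Ψ N).prod (inferInstance : MeasurableSpace ℝ)] c := fun c hc' =>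
    hgen ▸ MeasurableSpace.measurableSet_generateFrom hc'
  -- equality on rectangles
  have heq : ∀ c ∈ (Set.image2 (· ×ˢ ·)
      {A : Set Ω | MeasurableSet[filt Ψ N] A} {B : Set ℝ | MeasurableSet B}),
      (((P.prod ν).map (fun p : Ω × ℝ => (p.1, Ψ N p.1 p.2))).trim hle) c
        = ((P.prod ν).trim hle) c := by
    rintro _ ⟨A, hA, B, hB, rfl⟩
    have hArect := hCmeas _ (Set.mem_image2_of_mem hA hB)
    rw [hμ₁eval _ hArect, hμ₂eval _ hArect]
    have e1 : ∀ ω : Ω, {x : ℝ | (ω, Ψ N ω x) ∈ A ×ˢ B} = {x | ω ∈ A ∧ Ψ N ω x ∈ B} :=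
      fun ω => rfl
    have e2 : ∀ ω : Ω, {x : ℝ | (ω, x) ∈ A ×ˢ B} = {x | ω ∈ A ∧ x ∈ B} := fun ω => rfl
    calc ∫⁻ ω, ν {x | (ω, Ψ N ω x) ∈ A ×ˢ B} ∂P
        = ∫⁻ ω, ν {x | ω ∈ A ∧ Ψ N ω x ∈ B} ∂P := by simp_rw [e1]
      _ = P A * ν B := rect_lemma P Ψ hmeas hindep hident hc ν hinv N hA hB
      _ = ∫⁻ ω, ν {x | (ω, x) ∈ A ×ˢ B} ∂P := by
          simp_rw [e2]
          have e3 : ∀ ω : Ω, ν {x | ω ∈ A ∧ x ∈ B} = A.indicator (fun _ => ν B) ω := by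
            intro ω
            by_cases h : ω ∈ A
            · simp only [h, true_and, Set.indicator_of_mem]
              congr 1
            · simp [h]
          simp_rw [e3]
          rw [lintegral_indicator_const (filt_le hmeas N _ hA)]
          ring
  -- spanning sets
  have h1B : ⋃ k, (Set.univ ×ˢ MeasureTheory.spanningSets ν k : Set (Ω × ℝ)) = Set.univ := by
    simp_rw [← Set.prod_iUnion]
    rw [MeasureTheory.iUnion_spanningSets, Set.univ_prod_univ]
  have h2B : ∀ k, (Set.univ ×ˢ MeasureTheory.spanningSets ν k : Set (Ω × ℝ)) ∈
      (Set.image2 (· ×ˢ ·)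
        {A : Set Ω | MeasurableSet[filt Ψ N] A} {B : Set ℝ | MeasurableSet B}) := fun k =>
    Set.mem_image2_of_mem (@MeasurableSet.univ Ω (filt Ψ N)) (measurableSet_spanningSets ν k)
  have hfin : ∀ k,
      (((P.prod ν).map (fun p : Ω × ℝ => (p.1, Ψ N p.1 p.2))).trim hle)
        (Set.univ ×ˢ MeasureTheory.spanningSets ν k) ≠ ⊤ := by
    intro k
    rw [hμ₁eval _ (hCmeas _ (h2B k))]
    have e1 : ∀ ω : Ω, {x : ℝ | (ω, Ψ N ω x) ∈
        (Set.univ ×ˢ MeasureTheory.spanningSets ν k : Set (Ω × ℝ))}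
        = {x | Ψ N ω x ∈ MeasureTheory.spanningSets ν k} := by
      intro ω; ext x; simp
    simp_rw [e1]
    rw [lintegral_nu_psi P Ψ hmeas hident hc ν hinv (measurableSet_spanningSets ν k) N]
    exact (MeasureTheory.measure_spanningSets_lt_top ν k).ne
  have hext := MeasureTheory.Measure.ext_of_generateFrom_of_iUnion _ _ hgen hpi h1B h2B hfin heq
  rw [← hμ₁eval s hs, ← hμ₂eval s hs, hext]

end Step
section Main

variable {Ω : Type*} [MeasurableSpace Ω]

theorem main_aux (P : Measure Ω) [IsProbabilityMeasure P] (Ψ : ℕ → Ω → ℝ → ℝ)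
    (hmeas : ∀ n, Measurable (Ψ n))
    (hindep : iIndepFun Ψ P)
    (hident : ∀ n, Measure.map (Ψ n) P = Measure.map (Ψ 0) P)
    (hc : ∀ ω n, Continuous (Ψ n ω))
    (ν : Measure ℝ) [SigmaFinite ν]
    (hinv : ∀ B : Set ℝ, MeasurableSet B → ∫⁻ ω, ν ((Ψ 0 ω) ⁻¹' B) ∂P = ν B)
    (U V : Set ℝ) (hVc : IsClosed V) (hVm : MeasurableSet V) :
    P {ω | ∃ n : ℕ, ∀ x ∈ U, backComp Ψ ω n x ∈ V} * ν U ≤ ν V := by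
  classical
  by_cases hUe : U = ∅
  · subst hUe; simp
  obtain ⟨D, hDU, hDcount, hUD⟩ :=
    (TopologicalSpace.IsSeparable.of_separableSpace U).exists_countable_dense_subset
  set G : ℕ → Set Ω := fun n => {ω | ∀ x ∈ U, backComp Ψ ω n x ∈ V} with hGdef
  have hGfilt : ∀ n, MeasurableSet[filt Ψ n] (G n) := by
    intro n
    have hGeq : G n = ⋂ d ∈ D, {ω | backComp Ψ ω n d ∈ V} := by
      ext ω
      simp only [hGdef, Set.mem_setOf_eq, Set.mem_iInter]
      exact goodSet_iff_iInter (hc ω) hVc hDU hUD n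
    rw [hGeq]
    exact MeasurableSet.biInter hDcount
      (fun d _ => (filt_measurable_backComp_eval hc n d) hVm)
  have hGmeas : ∀ n, MeasurableSet (G n) := fun n => filt_le hmeas n _ (hGfilt n)
  have hx : ∀ m (x : ℝ), Measurable fun ω => Ψ m ω x :=
    fun m x => (measurable_pi_apply x).comp (hmeas m)
  set M : ℕ → Ω → ℝ≥0∞ := fun n ω => ν {x | backComp Ψ ω n x ∈ V} with hMdef
  have hMmeas : ∀ n, Measurable (M n) := by
    intro n
    have hj : Measurable fun p : Ω × ℝ => backComp Ψ p.1 n p.2 :=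
      measurable_backComp_uncurry hc hx n
    exact measurable_measure_prodMk_left (ν := ν) (hj hVm)
  -- the martingale step
  have hstar : ∀ N (C : Set Ω), MeasurableSet[filt Ψ N] C →
      ∫⁻ ω in C, M (N + 1) ω ∂P = ∫⁻ ω in C, M N ω ∂P := by
    intro N C hC
    have hCmeas : MeasurableSet C := filt_le hmeas N _ hC
    have h1 : @Measurable (Ω × ℝ) Ω
        ((filt Ψ N).prod (inferInstance : MeasurableSpace ℝ)) (filt Ψ N) Prod.fst :=
      measurable_fst
    have hsmeas : MeasurableSet[(filt Ψ N).prod (inferInstance : MeasurableSpace ℝ)]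
        {p : Ω × ℝ | p.1 ∈ C ∧ backComp Ψ p.1 N p.2 ∈ V} :=
      (h1 hC).inter ((filt_measurable_backComp hc N) hVm)
    have hstep := step_lemma P Ψ hmeas hindep hident hc ν hinv N hsmeas
    have e1 : ∀ ω : Ω,
        ν {x : ℝ | (ω, Ψ N ω x) ∈ {p : Ω × ℝ | p.1 ∈ C ∧ backComp Ψ p.1 N p.2 ∈ V}}
          = C.indicator (M (N + 1)) ω := by
      intro ω
      by_cases h : ω ∈ C
      · rw [Set.indicator_of_mem h]
        congr 1
        ext x
        simp only [Set.mem_setOf_eq, h, true_and]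
        rfl
      · rw [Set.indicator_of_notMem h]
        have he : {x : ℝ | (ω, Ψ N ω x) ∈
            {p : Ω × ℝ | p.1 ∈ C ∧ backComp Ψ p.1 N p.2 ∈ V}} = ∅ := by
          ext x; simp [h]
        rw [he]
        exact measure_empty
    have e2 : ∀ ω : Ω,
        ν {x : ℝ | (ω, x) ∈ {p : Ω × ℝ | p.1 ∈ C ∧ backComp Ψ p.1 N p.2 ∈ V}}
          = C.indicator (M N) ω := by
      intro ω
      by_cases h : ω ∈ C
      · rw [Set.indicator_of_mem h]
        congr 1
        ext x
        simp only [Set.mem_setOf_eq, h, true_and]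
      · rw [Set.indicator_of_notMem h]
        have he : {x : ℝ | (ω, x) ∈
            {p : Ω × ℝ | p.1 ∈ C ∧ backComp Ψ p.1 N p.2 ∈ V}} = ∅ := by
          ext x; simp [h]
        rw [he]
        exact measure_empty
    rw [lintegral_congr e1, lintegral_congr e2] at hstep
    rw [← lintegral_indicator hCmeas, ← lintegral_indicator hCmeas]
    exact hstep
  -- the stopped process
  set W : ℕ → Ω → ℝ≥0∞ := fun N ω => M (stopT (fun n => ω ∈ G n) N) ω with hWdef
  have hWlint : ∀ N, ∫⁻ ω, W N ω ∂P = ν V := by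
    intro N
    induction N with
    | zero =>
      have hW0 : ∀ ω, W 0 ω = ν V := by
        intro ω
        have h0 : stopT (fun n => ω ∈ G n) 0 = 0 := Nat.le_zero.mp (stopT_le _ 0)
        have hMV : M 0 ω = ν V := by
          rw [hMdef]
          congr 1
        simp only [hWdef]
        rw [h0, hMV]
      rw [lintegral_congr hW0, lintegral_const, measure_univ, mul_one]
    | succ N ih =>
      set C : Set Ω := {ω | ∀ n ≤ N, ω ∉ G n} with hCdef
      have hCfilt : MeasurableSet[filt Ψ N] C := by
        have hCeq : C = ⋂ n ∈ Set.Iic N, (G n)ᶜ := by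
          ext ω; simp [hCdef]
        rw [hCeq]
        exact MeasurableSet.biInter (Set.to_countable _)
          (fun n hn => ((filt_mono Ψ hn) _ (hGfilt n)).compl)
      have hCmeas : MeasurableSet C := filt_le hmeas N _ hCfilt
      have hsplitW : ∀ f : Ω → ℝ≥0∞,
          ∫⁻ ω, f ω ∂P = ∫⁻ ω in C, f ω ∂P + ∫⁻ ω in Cᶜ, f ω ∂P :=
        fun f => (lintegral_add_compl f hCmeas).symm
      have h2 : ∫⁻ ω in C, W (N + 1) ω ∂P = ∫⁻ ω in C, M (N + 1) ω ∂P := by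
        refine setLIntegral_congr_fun hCmeas (fun ω hω => ?_)
        simp only [hWdef]
        rw [stopT_succ_eq_of_not hω]
      have h3 : ∫⁻ ω in C, W N ω ∂P = ∫⁻ ω in C, M N ω ∂P := by
        refine setLIntegral_congr_fun hCmeas (fun ω hω => ?_)
        simp only [hWdef]
        rw [stopT_eq_of_not hω]
      have h1 : ∫⁻ ω in Cᶜ, W (N + 1) ω ∂P = ∫⁻ ω in Cᶜ, W N ω ∂P := by
        refine setLIntegral_congr_fun hCmeas.compl (fun ω hω => ?_)
        have hex : ∃ n ≤ N, ω ∈ G n := by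
          by_contra hno
          push_neg at hno
          exact hω hno
        simp only [hWdef]
        rw [stopT_succ_eq_of_exists hex]
      rw [hsplitW (W (N + 1)), h2, h1, hstar N C hCfilt, ← h3, ← hsplitW (W N)]
      exact ih
  -- the first-entry events
  set A : ℕ → Set Ω := fun n => G n ∩ ⋂ k ∈ Set.Iio n, (G k)ᶜ with hAdef
  have hAmin : ∀ {n ω}, ω ∈ A n → ∀ k < n, ω ∉ G k := by
    intro n ω hω k hk
    have := hω.2
    rw [Set.mem_iInter₂] at this
    exact this k hk
  have hAmeas : ∀ n, MeasurableSet (A n) := fun n =>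
    (hGmeas n).inter (MeasurableSet.biInter (Set.to_countable _) fun k _ => (hGmeas k).compl)
  have hEsub : {ω | ∃ n, ω ∈ G n} ⊆ ⋃ n, A n := by
    intro ω hω
    obtain ⟨n, hn⟩ := hω
    have hne : Set.Nonempty {m | ω ∈ G m} := ⟨n, hn⟩
    refine Set.mem_iUnion.mpr ⟨sInf {m | ω ∈ G m}, ⟨Nat.sInf_mem hne, ?_⟩⟩
    rw [Set.mem_iInter₂]
    intro k hk
    exact Nat.notMem_of_lt_sInf hk
  have hbound : ∀ N, ∑ n ∈ Finset.range N, P (A n) * ν U ≤ ν V := by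
    intro N
    have hterm : ∀ n ∈ Finset.range N, P (A n) * ν U ≤ ∫⁻ ω in A n, M n ω ∂P := by
      intro n _
      have hlb : ∀ ω ∈ A n, ν U ≤ M n ω := by
        intro ω hω
        exact measure_mono (fun x hxU => hω.1 x hxU)
      calc P (A n) * ν U = ν U * P (A n) := mul_comm _ _
        _ = ∫⁻ _ in A n, ν U ∂P := (setLIntegral_const (A n) (ν U)).symm
        _ ≤ ∫⁻ ω in A n, M n ω ∂P := setLIntegral_mono (hMmeas n) hlb
    calc ∑ n ∈ Finset.range N, P (A n) * ν U
        ≤ ∑ n ∈ Finset.range N, ∫⁻ ω in A n, M n ω ∂P := Finset.sum_le_sum hterm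
      _ = ∫⁻ ω, ∑ n ∈ Finset.range N, (A n).indicator (M n) ω ∂P := by
          rw [lintegral_finset_sum _ (fun n _ => (hMmeas n).indicator (hAmeas n))]
          exact Finset.sum_congr rfl fun n _ => (lintegral_indicator (hAmeas n) (M n)).symm
      _ ≤ ∫⁻ ω, W N ω ∂P := by
          refine lintegral_mono fun ω => ?_
          by_cases hωA : ∃ n, n < N ∧ ω ∈ A n
          · obtain ⟨n, hnN, hωn⟩ := hωA
            have hsum : ∑ k ∈ Finset.range N, (A k).indicator (M k) ω = M n ω := by
              rw [Finset.sum_eq_single_of_mem n (Finset.mem_range.mpr hnN)]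
              · exact Set.indicator_of_mem hωn (M n)
              · intro k _ hkn
                apply Set.indicator_of_notMem
                intro hωk
                rcases lt_or_gt_of_ne hkn with h | h
                · exact hAmin hωn k h hωk.1
                · exact hAmin hωk n h hωn.1
            rw [hsum]
            have hstop : stopT (fun m => ω ∈ G m) N = n :=
              stopT_eq_first hωn.1 (fun k hk => hAmin hωn k hk) (le_of_lt hnN)
            simp only [hWdef]
            rw [hstop]
          · have hz : ∑ k ∈ Finset.range N, (A k).indicator (M k) ω = 0 :=
              Finset.sum_eq_zero fun k hk =>
                Set.indicator_of_notMem
                  (fun hωk => hωA ⟨k, Finset.mem_range.mp hk, hωk⟩) _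
            rw [hz]
            exact zero_le
      _ = ν V := hWlint N
  have htsum : ∑' n, P (A n) * ν U ≤ ν V := by
    rw [ENNReal.tsum_eq_iSup_sum]
    refine iSup_le fun s => ?_
    obtain ⟨N, hN⟩ := s.exists_nat_subset_range
    exact le_trans (Finset.sum_le_sum_of_subset hN) (hbound N)
  show P {ω | ∃ n, ω ∈ G n} * ν U ≤ ν V
  calc P {ω | ∃ n, ω ∈ G n} * ν U
      ≤ (∑' n, P (A n)) * ν U :=
        mul_le_mul_left ((measure_mono hEsub).trans (measure_iUnion_le A)) _
    _ = ∑' n, P (A n) * ν U := ENNReal.tsum_mul_right.symm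
    _ ≤ ν V := htsum

end Main

theorem invariant_measure_interval_bound {Ω : Type*} [MeasurableSpace Ω]
    (P : Measure Ω) [IsProbabilityMeasure P]
    (Ψ : ℕ → Ω → ℝ → ℝ) (hmeas : ∀ n, Measurable (Ψ n))
    (hindep : iIndepFun Ψ P)
    (hident : ∀ n, Measure.map (Ψ n) P = Measure.map (Ψ 0) P)
    (hcont : ∀ᵐ ω ∂P, ∀ n, Continuous (Ψ n ω))
    (ν : Measure ℝ) [IsLocallyFiniteMeasure ν]
    (hinv : ∀ B : Set ℝ, MeasurableSet B → ∫⁻ ω, ν ((Ψ 0 ω) ⁻¹' B) ∂P = ν B)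
    (U V : Set ℝ) (aU bU aV bV : ℝ) (hU : U = Set.Icc aU bU) (hV : V = Set.Icc aV bV) :
    P {ω | ∃ n : ℕ, ∀ x ∈ U, backComp Ψ ω n x ∈ V} * ν U ≤ ν V := by
  classical
  set t : Set Ω := toMeasurable P {ω | ¬ ∀ n, Continuous (Ψ n ω)} with htdef
  have htm : MeasurableSet t := measurableSet_toMeasurable P _
  have ht0 : P t = 0 := by
    rw [htdef, measure_toMeasurable]
    exact hcont
  have htc : ∀ᵐ ω ∂P, ω ∉ t := measure_eq_zero_iff_ae_notMem.mp ht0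
  set Ψ' : ℕ → Ω → ℝ → ℝ := fun n => t.piecewise (fun _ => id) (Ψ n) with hΨ'def
  have hmeas' : ∀ n, Measurable (Ψ' n) :=
    fun n => Measurable.piecewise htm measurable_const (hmeas n)
  have hΨ'eq : ∀ n (ω : Ω), ω ∉ t → Ψ' n ω = Ψ n ω :=
    fun n ω hω => Set.piecewise_eq_of_notMem _ _ _ hω
  have hae : ∀ n, Ψ' n =ᵐ[P] Ψ n := fun n => htc.mono fun ω hω => hΨ'eq n ω hω
  have hcont' : ∀ ω n, Continuous (Ψ' n ω) := by
    intro ω n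
    by_cases hω : ω ∈ t
    · rw [hΨ'def]
      simp only [Set.piecewise_eq_of_mem _ _ _ hω]
      exact continuous_id
    · rw [hΨ'eq n ω hω]
      by_contra hcn
      exact hω (subset_toMeasurable P _ (fun hall => hcn (hall n)))
  have hident' : ∀ n, Measure.map (Ψ' n) P = Measure.map (Ψ' 0) P := by
    intro n
    rw [Measure.map_congr (hae n), Measure.map_congr (hae 0)]
    exact hident n
  have hindep' : iIndepFun Ψ' P := by
    rw [iIndepFun_iff_measure_inter_preimage_eq_mul] at hindep ⊢
    intro S sets hsets
    have hinter : P (⋂ i ∈ S, Ψ' i ⁻¹' sets i) = P (⋂ i ∈ S, Ψ i ⁻¹' sets i) := by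
      apply measure_congr
      apply Filter.eventuallyEq_set.mpr
      filter_upwards [htc] with ω hω
      simp only [Set.mem_iInter, Set.mem_preimage]
      constructor
      · intro h i hi
        have := h i hi
        rwa [hΨ'eq i ω hω] at this
      · intro h i hi
        rw [hΨ'eq i ω hω]
        exact h i hi
    have hfac : ∀ i, P (Ψ' i ⁻¹' sets i) = P (Ψ i ⁻¹' sets i) := by
      intro i
      apply measure_congr
      apply Filter.eventuallyEq_set.mpr
      filter_upwards [htc] with ω hω
      simp only [Set.mem_preimage]
      rw [hΨ'eq i ω hω]
    rw [hinter]
    simp_rw [hfac]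
    exact hindep S hsets
  have hinv' : ∀ B : Set ℝ, MeasurableSet B → ∫⁻ ω, ν ((Ψ' 0 ω) ⁻¹' B) ∂P = ν B := by
    intro B hB
    rw [← hinv B hB]
    apply lintegral_congr_ae
    filter_upwards [htc] with ω hω
    rw [hΨ'eq 0 ω hω]
  have hgoal : P {ω | ∃ n, ∀ x ∈ U, backComp Ψ ω n x ∈ V}
      = P {ω | ∃ n, ∀ x ∈ U, backComp Ψ' ω n x ∈ V} := by
    apply measure_congr
    apply Filter.eventuallyEq_set.mpr
    filter_upwards [htc] with ω hω
    have hbc : ∀ n, backComp Ψ ω n = backComp Ψ' ω n := by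
      intro n
      induction n with
      | zero => rfl
      | succ n ihn =>
        funext x
        rw [backComp_succ, backComp_succ, ihn, hΨ'eq n ω hω]
    constructor
    · rintro ⟨n, hn⟩
      exact ⟨n, by rw [← hbc n]; exact hn⟩
    · rintro ⟨n, hn⟩
      exact ⟨n, by rw [hbc n]; exact hn⟩
  rw [hgoal]
  exact main_aux P Ψ' hmeas' hindep' hident' hcont' ν hinv' U V
    (hV ▸ isClosed_Icc) (hV ▸ measurableSet_Icc)
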